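/- Let ρ^{AB}_{ij}, ρ^{AC}_{ik}, ρ^{BC}_{lk}, r' be real numbers such that for two pairs of choices (l,k) and (l',k') the 4×4 symmetric matrix with unit diagonal and entries ρ^{BC}, ρ^{AC}, ρ^{AB}, r' arranged as [[1, ρ^{BC}_{lk}, ρ^{AC}_{1k}, ρ^{AC}_{0k}],[ρ^{BC}_{lk}, 1, ρ^{AB}_{1l}, ρ^{AB}_{0l}],[ρ^{AC}_{1k}, ρ^{AB}_{1l}, 1, r'],[ρ^{AC}_{0k}, ρ^{AB}_{0l}, r', 1]] is positive semidefinite (same r' for both pairs), and (ρ^{BC}_{lk})² < 1, (ρ^{BC}_{l'k'})² < 1. Then |ζ₀₁(l,k) - ζ₀₁(l',k')| ≤ √((1 - ζ₁₁(l,k))(1 - ζ₀₀(l,k))) + √((1 - ζ₁₁(l',k'))(1 - ζ₀₀(l',k'))), where ζᵢⱼ(l,k) = [ρ^{AC}_{ik}ρ^{AC}_{jk} - ρ^{BC}_{lk}ρ^{AB}_{il}ρ^{AC}_{jk} - ρ^{BC}_{lk}ρ^{AB}_{jl}ρ^{AC}_{ik} + ρ^{AB}_{il}ρ^{AB}_{jl}]/(1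 - (ρ^{BC}_{lk})²). -/

import Mathlib

lemma landau_aux (ρ c0 c1 b0 b1 r' : ℝ) (hρ : ρ ^ 2 < 1)
    (hQ : ∀ x y a b : ℝ, 0 ≤ x^2 + y^2 + a^2 + b^2 + 2*ρ*x*y + 2*c1*x*a + 2*c0*x*b
      + 2*b1*y*a + 2*b0*y*b + 2*r'*a*b) :
    |(c0*c1 - ρ*b0*c1 - ρ*b1*c0 + b0*b1)/(1-ρ^2) - r'| ≤
      Real.sqrt ((1 - (c1*c1 - ρ*b1*c1 - ρ*b1*c1 + b1*b1)/(1-ρ^2)) *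
        (1 - (c0*c0 - ρ*b0*c0 - ρ*b0*c0 + b0*b0)/(1-ρ^2))) := by
  have hd : (0:ℝ) < 1 - ρ^2 := by linarith
  have hd' : (1:ℝ) - ρ^2 ≠ 0 := ne_of_gt hd
  set P : ℝ := 1 - (c1*c1 - ρ*b1*c1 - ρ*b1*c1 + b1*b1)/(1-ρ^2) with hP
  set R : ℝ := 1 - (c0*c0 - ρ*b0*c0 - ρ*b0*c0 + b0*b0)/(1-ρ^2) with hR
  set Q : ℝ := (c0*c1 - ρ*b0*c1 - ρ*b1*c0 + b0*b1)/(1-ρ^2) - r' with hQdef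
  have key : ∀ a : ℝ, 0 ≤ P * (a*a) + (-2*Q) * a + R := by
    intro a
    have h := hQ (-(c1*a + c0 - ρ*(b1*a+b0))/(1-ρ^2)) (-(b1*a+b0 - ρ*(c1*a+c0))/(1-ρ^2)) a 1
    have heq : (-(c1*a + c0 - ρ*(b1*a+b0))/(1-ρ^2))^2 + (-(b1*a+b0 - ρ*(c1*a+c0))/(1-ρ^2))^2
        + a^2 + 1^2 + 2*ρ*(-(c1*a + c0 - ρ*(b1*a+b0))/(1-ρ^2))*(-(b1*a+b0 - ρ*(c1*a+c0))/(1-ρ^2))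
        + 2*c1*(-(c1*a + c0 - ρ*(b1*a+b0))/(1-ρ^2))*a + 2*c0*(-(c1*a + c0 - ρ*(b1*a+b0))/(1-ρ^2))*1
        + 2*b1*(-(b1*a+b0 - ρ*(c1*a+c0))/(1-ρ^2))*a + 2*b0*(-(b1*a+b0 - ρ*(c1*a+c0))/(1-ρ^2))*1
        + 2*r'*a*1 = P * (a*a) + (-2*Q) * a + R := by
      rw [hP, hR, hQdef]; field_simp; ring
    rw [heq] at h; exact h
  have hdis := discrim_le_zero key
  rw [discrim] at hdis
  have hQ2 : Q^2 ≤ P * R := by nlinarith [hdis]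
  calc |Q| = Real.sqrt (Q^2) := (Real.sqrt_sq_eq_abs Q).symm
    _ ≤ Real.sqrt (P*R) := Real.sqrt_le_sqrt hQ2

noncomputable def zeta (ρAB ρAC : Fin 2 → ℕ → ℝ) (ρBC : ℕ → ℕ → ℝ)
    (i j : Fin 2) (l k : ℕ) : ℝ :=
  (ρAC i k * ρAC j k - ρBC l k * ρAB i l * ρAC j k - ρBC l k * ρAB j l * ρAC i k +
    ρAB i l * ρAB j l) / (1 - (ρBC l k) ^ 2)

theorem stmt_17 (ρAB ρAC : Fin 2 → ℕ → ℝ) (ρBC : ℕ → ℕ → ℝ) (r' : ℝ)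
    (l k l' k' : ℕ)
    (hPSD : ∀ p : ℕ × ℕ, p = (l, k) ∨ p = (l', k') →
      (!![(1 : ℝ), ρBC p.1 p.2, ρAC 1 p.2, ρAC 0 p.2;
          ρBC p.1 p.2, 1, ρAB 1 p.1, ρAB 0 p.1;
          ρAC 1 p.2, ρAB 1 p.1, 1, r';
          ρAC 0 p.2, ρAB 0 p.1, r', 1]).PosSemidef)
    (h1 : (ρBC l k) ^ 2 < 1) (h2 : (ρBC l' k') ^ 2 < 1) :
    |zeta ρAB ρAC ρBC 0 1 l k - zeta ρAB ρAC ρBC 0 1 l' k'| ≤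
      Real.sqrt ((1 - zeta ρAB ρAC ρBC 1 1 l k) * (1 - zeta ρAB ρAC ρBC 0 0 l k)) +
        Real.sqrt ((1 - zeta ρAB ρAC ρBC 1 1 l' k') * (1 - zeta ρAB ρAC ρBC 0 0 l' k')) := by
  have main : ∀ (L K : ℕ), (ρBC L K)^2 < 1 →
      (!![(1 : ℝ), ρBC L K, ρAC 1 K, ρAC 0 K;
          ρBC L K, 1, ρAB 1 L, ρAB 0 L;
          ρAC 1 K, ρAB 1 L, 1, r';
          ρAC 0 K, ρAB 0 L, r', 1]).PosSemidef →
      |zeta ρAB ρAC ρBC 0 1 L K - r'| ≤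
        Real.sqrt ((1 - zeta ρAB ρAC ρBC 1 1 L K) * (1 - zeta ρAB ρAC ρBC 0 0 L K)) := by
    intro L K hlt hps
    have hq : ∀ x y a b : ℝ, 0 ≤ x^2 + y^2 + a^2 + b^2 + 2*(ρBC L K)*x*y
        + 2*(ρAC 1 K)*x*a + 2*(ρAC 0 K)*x*b + 2*(ρAB 1 L)*y*a + 2*(ρAB 0 L)*y*b + 2*r'*a*b := by
      intro x y a b
      have h := hps.dotProduct_mulVec_nonneg ![x, y, a, b]
      simp [Matrix.mulVec, dotProduct, Fin.sum_univ_four] at h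
      nlinarith [h]
    have := landau_aux (ρBC L K) (ρAC 0 K) (ρAC 1 K) (ρAB 0 L) (ρAB 1 L) r' hlt hq
    simpa [zeta, mul_comm, mul_left_comm, mul_assoc, sq] using this
  have A := main l k h1 (hPSD (l, k) (Or.inl rfl))
  have B := main l' k' h2 (hPSD (l', k') (Or.inr rfl))
  calc |zeta ρAB ρAC ρBC 0 1 l k - zeta ρAB ρAC ρBC 0 1 l' k'|
      ≤ |zeta ρAB ρAC ρBC 0 1 l k - r'| + |zeta ρAB ρAC ρBC 0 1 l' k' - r'| := by
        have h := abs_sub_le (zeta ρAB ρAC ρBC 0 1 l k) r' (zeta ρAB ρAC ρBC 0 1 l' k')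
        rwa [abs_sub_comm r' (zeta ρAB ρAC ρBC 0 1 l' k')] at h
    _ ≤ _ := add_le_add A B
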